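/- In the (3,1,3) scenario (three inputs for Alice, Bob has one fixed input and three outputs), any classical strategy satisfies the facet inequality p(2|1) + p(1|3) + p(3|1) ≤ 3D, where p(z|x) = Σ_m p_e(m|x) p_d(z|m) and D = (1/3) Σ_m max_{x∈{1,2,3}} p_e(m|x). -/
import Mathlib


open BigOperators

/-- (3,1,3) scenario: with Alice's inputs `x ∈ {1,2,3}` (here `0,1,2`) and Bob's outputs
`z ∈ {1,2,3}` (here `0,1,2`), any classical strategy obeys the facet inequality
`p(2|1) + p(1|3) + p(3|1) ≤ 3D`. -/
theorem stmt10 (M : Type*) [Fintype M]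
    (pe : M → Fin 3 → ℝ) (hpe0 : ∀ m x, 0 ≤ pe m x)
    (hpe1 : ∀ x, ∑ m, pe m x = 1)
    (pd : Fin 3 → M → ℝ) (hpd0 : ∀ z m, 0 ≤ pd z m)
    (hpd1 : ∀ m, ∑ z, pd z m = 1)
    (p : Fin 3 → Fin 3 → ℝ)
    (hp : ∀ z x, p z x = ∑ m, pe m x * pd z m)
    (D : ℝ)
    (hD : D = (1 / 3 : ℝ) * ∑ m, Finset.univ.sup' Finset.univ_nonempty fun x => pe m x) :
    p 1 0 + p 0 2 + p 2 0 ≤ 3 * D := by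
  have key : p 1 0 + p 0 2 + p 2 0
      = ∑ m, (pe m 0 * pd 1 m + pe m 2 * pd 0 m + pe m 0 * pd 2 m) := by
    simp only [hp, ← Finset.sum_add_distrib]
  rw [key, hD]
  rw [show (3:ℝ) * ((1/3:ℝ) * ∑ m, Finset.univ.sup' Finset.univ_nonempty fun x => pe m x)
      = ∑ m, Finset.univ.sup' Finset.univ_nonempty fun x => pe m x by ring]
  apply Finset.sum_le_sum
  intro m _
  set s := Finset.univ.sup' Finset.univ_nonempty fun x => pe m x with hs
  have h0 : pe m 0 ≤ s := Finset.le_sup' _ (Finset.mem_univ 0)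
  have h2 : pe m 2 ≤ s := Finset.le_sup' _ (Finset.mem_univ 2)
  have hsum : pd 0 m + pd 1 m + pd 2 m = 1 := by
    have := hpd1 m
    simpa [Fin.sum_univ_three] using this
  calc pe m 0 * pd 1 m + pe m 2 * pd 0 m + pe m 0 * pd 2 m
      ≤ s * pd 1 m + s * pd 0 m + s * pd 2 m := by
        gcongr <;> first | exact h0 | exact h2 | exact hpd0 _ _
    _ = s * (pd 0 m + pd 1 m + pd 2 m) := by ring
    _ = s := by rw [hsum, mul_one]
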